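/- Let v > 1 and y ∈ ℚ_p^n. If there exist infinitely many integer vectors (q₀,q) ∈ ℤ^{n+1} with |q₀ + q·y|_p < ‖(q₀,q)‖_∞^{-v}, then the quantities ‖q‖_p · ‖(q₀,q)‖_∞ arising from such solutions are unbounded, and each such solution satisfies |q₀ + q·y|_p < (‖q‖_p · ‖(q₀,q)‖_∞)^{-(v-1)} · ‖(q₀,q)‖_∞^{-1}. -/

import Mathlib

set_option maxHeartbeats 1000000

open scoped BigOperators

/-- `x` lies in `ℤ[1/p] ⊂ ℚ`. -/
def ZInvP (p : ℕ) (x : ℚ) : Prop := ∃ (a : ℤ) (k : ℕ), x = a / (p : ℚ) ^ k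

/-- `‖q‖_p`: max of `p`-adic absolute values of the coordinates of a rational vector. -/
noncomputable def pnorm (p : ℕ) {m : ℕ} (q : Fin m → ℚ) : ℝ :=
  ⨆ i, ((padicNorm p (q i) : ℚ) : ℝ)

/-- `‖q‖_∞`: max of archimedean absolute values of the coordinates of a rational vector. -/
noncomputable def supnorm {m : ℕ} (q : Fin m → ℚ) : ℝ :=
  ⨆ i, |((q i : ℚ) : ℝ)|

/-- `‖v‖_p` for a vector of `p`-adic numbers. -/
noncomputable def pnormP {p : ℕ} [Fact p.Prime] {m : ℕ} (v : Fin m → ℚ_[p]) : ℝ :=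
  ⨆ i, ‖v i‖

/-- integer height of an integer vector pair -/
def hgt {n : ℕ} (qq : ℤ × (Fin n → ℤ)) : ℕ :=
  Finset.univ.sup fun i : Fin (n+1) => ((Fin.cons qq.1 qq.2 : Fin (n+1) → ℤ) i).natAbs

noncomputable def Hh {n : ℕ} (qq : ℤ × (Fin n → ℤ)) : ℝ :=
  supnorm (Fin.cons (qq.1 : ℚ) (fun i => (qq.2 i : ℚ)))

noncomputable def Pp (p : ℕ) {n : ℕ} (qq : ℤ × (Fin n → ℤ)) : ℝ :=
  pnorm p (fun i => (qq.2 i : ℚ))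

lemma le_fin_iSup {m : ℕ} (f : Fin m → ℝ) (i : Fin m) : f i ≤ ⨆ j, f j :=
  le_ciSup (Set.finite_range f).bddAbove i

lemma Hh_eq_hgt {n : ℕ} (qq : ℤ × (Fin n → ℤ)) : Hh qq = (hgt qq : ℝ) := by
  have key : ∀ j : Fin (n+1),
      |((Fin.cons (qq.1 : ℚ) (fun i => (qq.2 i : ℚ)) : Fin (n+1) → ℚ) j : ℝ)| =
        (((Fin.cons qq.1 qq.2 : Fin (n+1) → ℤ) j).natAbs : ℝ) := by
    intro j
    induction j using Fin.cases with
    | zero => simp [Nat.cast_natAbs]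
    | succ i => simp [Nat.cast_natAbs]
  unfold Hh supnorm hgt
  apply le_antisymm
  · apply Real.iSup_le _ (Nat.cast_nonneg _)
    intro j
    rw [key j]
    exact Nat.cast_le.mpr (Finset.le_sup (f := fun i => ((Fin.cons qq.1 qq.2 : Fin (n+1) → ℤ) i).natAbs) (Finset.mem_univ j))
  · obtain ⟨j, _, hj⟩ := Finset.exists_mem_eq_sup Finset.univ
      (Finset.univ_nonempty) (fun i : Fin (n+1) => ((Fin.cons qq.1 qq.2 : Fin (n+1) → ℤ) i).natAbs)
    rw [hj, ← key j]
    exact le_ciSup (f := fun i => |(((Fin.cons (qq.1 : ℚ) (fun i => (qq.2 i : ℚ)) : Fin (n+1) → ℚ)) i : ℝ)|) (Set.finite_range _).bddAbove j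

lemma Hh_nonneg {n : ℕ} (qq : ℤ × (Fin n → ℤ)) : 0 ≤ Hh qq := by
  rw [Hh_eq_hgt]; exact Nat.cast_nonneg _

lemma abs_fst_le_Hh {n : ℕ} (qq : ℤ × (Fin n → ℤ)) : |((qq.1 : ℚ) : ℝ)| ≤ Hh qq := by
  have := le_fin_iSup (fun j => |((Fin.cons (qq.1 : ℚ) (fun i => (qq.2 i : ℚ)) : Fin (n+1) → ℚ) j : ℝ)|) 0
  simpa [Hh, supnorm] using this

lemma abs_snd_le_Hh {n : ℕ} (qq : ℤ × (Fin n → ℤ)) (i : Fin n) : |((qq.2 i : ℚ) : ℝ)| ≤ Hh qq := by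
  have := le_fin_iSup (fun j => |((Fin.cons (qq.1 : ℚ) (fun i => (qq.2 i : ℚ)) : Fin (n+1) → ℚ) j : ℝ)|) i.succ
  simpa [Hh, supnorm] using this

lemma padic_le_Pp (p : ℕ) {n : ℕ} (qq : ℤ × (Fin n → ℤ)) (i : Fin n) :
    ((padicNorm p (qq.2 i : ℚ) : ℚ) : ℝ) ≤ Pp p qq :=
  le_fin_iSup (fun i => ((padicNorm p (qq.2 i : ℚ) : ℚ) : ℝ)) i

lemma Pp_le_one (p : ℕ) {n : ℕ} [Fact p.Prime] (qq : ℤ × (Fin n → ℤ)) : Pp p qq ≤ 1 := by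
  apply Real.iSup_le _ zero_le_one
  intro i
  exact_mod_cast padicNorm.of_int (qq.2 i)

lemma one_le_padicNorm_mul_abs (p : ℕ) [hp : Fact p.Prime] (a : ℤ) (ha : a ≠ 0) :
    1 ≤ padicNorm p a * |(a : ℚ)| := by
  have hv : (p : ℤ) ^ padicValInt p a ∣ a := padicValInt_dvd a
  have hle : (p : ℚ) ^ (padicValInt p a : ℤ) ≤ |(a : ℚ)| := by
    have := Int.le_of_dvd (abs_pos.2 ha) ((dvd_abs _ _).2 hv)
    calc (p : ℚ) ^ (padicValInt p a : ℤ) = ((p : ℤ) ^ padicValInt p a : ℤ) := by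
          rw [zpow_natCast]; push_cast; ring
    _ ≤ |(a : ℚ)| := by exact_mod_cast this
  rw [padicNorm.eq_zpow_of_nonzero (by exact_mod_cast ha), padicValRat.of_int]
  have hp0 : (0 : ℚ) < (p : ℚ) ^ (padicValInt p a : ℤ) := zpow_pos (by exact_mod_cast hp.out.pos) _
  rw [zpow_neg, inv_mul_eq_div, le_div_iff₀ hp0, one_mul]
  exact hle

lemma norm_int_cast_eq (p : ℕ) [Fact p.Prime] (a : ℤ) :
    ‖(a : ℚ_[p])‖ = ((padicNorm p (a : ℚ) : ℚ) : ℝ) := by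
  have h : ((a : ℚ) : ℚ_[p]) = (a : ℚ_[p]) := by push_cast; ring
  rw [← h, Padic.eq_padicNorm]

lemma elem_facts (p : ℕ) [hp : Fact p.Prime] {n : ℕ} (y : Fin n → ℚ_[p]) {v : ℝ} (hv : 1 < v)
    (qq : ℤ × (Fin n → ℤ))
    (hmem : ‖((qq.1 : ℚ_[p]) + ∑ i, (qq.2 i : ℚ_[p]) * y i)‖ < Hh qq ^ (-v)) :
    (1 ≤ Hh qq) ∧ (∃ i, qq.2 i ≠ 0) ∧ 0 < Pp p qq ∧ 1 ≤ Pp p qq * Hh qq := by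
  -- some coordinate is nonzero
  have hvne : (-v) ≠ 0 := by linarith
  have hcoord : qq.1 ≠ 0 ∨ ∃ i, qq.2 i ≠ 0 := by
    by_contra h
    push_neg at h
    obtain ⟨h1, h2⟩ := h
    have hH : Hh qq = 0 := by
      rw [Hh_eq_hgt]
      have : hgt qq = 0 := by
        apply Nat.le_antisymm _ (Nat.zero_le _)
        apply Finset.sup_le
        intro j _
        induction j using Fin.cases with
        | zero => simp [h1]
        | succ i => simp [h2 i]
      rw [this]; norm_num
    rw [hH, Real.zero_rpow hvne] at hmem
    have : ((qq.1 : ℚ_[p]) + ∑ i, (qq.2 i : ℚ_[p]) * y i) = 0 := by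
      simp [h1, h2]
    rw [this, norm_zero] at hmem
    exact lt_irrefl 0 hmem
  have hH1 : 1 ≤ Hh qq := by
    rcases hcoord with h | ⟨i, hi⟩
    · calc (1 : ℝ) ≤ |((qq.1 : ℚ) : ℝ)| := by
            rw [show |((qq.1 : ℚ) : ℝ)| = |((qq.1 : ℝ))| by norm_cast]
            exact_mod_cast Int.one_le_abs h
      _ ≤ Hh qq := abs_fst_le_Hh qq
    · calc (1 : ℝ) ≤ |((qq.2 i : ℚ) : ℝ)| := by
            rw [show |((qq.2 i : ℚ) : ℝ)| = |((qq.2 i : ℝ))| by norm_cast]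
            exact_mod_cast Int.one_le_abs hi
      _ ≤ Hh qq := abs_snd_le_Hh qq i
  have hHpos : (0 : ℝ) < Hh qq := lt_of_lt_of_le one_pos hH1
  have hq2 : ∃ i, qq.2 i ≠ 0 := by
    by_contra h
    push_neg at h
    have h1 : qq.1 ≠ 0 := by
      rcases hcoord with h' | ⟨i, hi⟩
      · exact h'
      · exact absurd (h i) hi
    have hAv : ((qq.1 : ℚ_[p]) + ∑ i, (qq.2 i : ℚ_[p]) * y i) = (qq.1 : ℚ_[p]) := by
      simp [h]
    rw [hAv, norm_int_cast_eq] at hmem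
    -- padicNorm p qq.1 ≥ |qq.1|⁻¹ ≥ Hh⁻¹ ≥ Hh^(-v)
    have habs : (0:ℝ) < |((qq.1 : ℚ) : ℝ)| := by
      rw [show |((qq.1 : ℚ) : ℝ)| = |((qq.1 : ℝ))| by norm_cast]
      exact_mod_cast abs_pos.2 h1
    have h2 : Hh qq ^ (-v) ≤ Hh qq ^ (-1 : ℝ) :=
      Real.rpow_le_rpow_of_exponent_le hH1 (by linarith)
    have h3 : Hh qq ^ (-1 : ℝ) = (Hh qq)⁻¹ := Real.rpow_neg_one _
    have h4 : (Hh qq)⁻¹ ≤ |((qq.1 : ℚ) : ℝ)|⁻¹ :=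
      inv_anti₀ habs (abs_fst_le_Hh qq)
    have h5 : |((qq.1 : ℚ) : ℝ)|⁻¹ ≤ ((padicNorm p (qq.1 : ℚ) : ℚ) : ℝ) := by
      rw [inv_le_iff_one_le_mul₀ habs]
      have := one_le_padicNorm_mul_abs p qq.1 h1
      exact_mod_cast this
    linarith
  obtain ⟨i0, hi0⟩ := hq2
  have hpn : (0 : ℝ) < ((padicNorm p (qq.2 i0 : ℚ) : ℚ) : ℝ) := by
    have : padicNorm p (qq.2 i0 : ℚ) ≠ 0 := by
      rw [padicNorm.eq_zpow_of_nonzero (by exact_mod_cast hi0)]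
      have hp1 : (0:ℚ) < (p:ℚ) := by exact_mod_cast hp.out.pos
      exact ne_of_gt (zpow_pos hp1 _)
    have h0 := padicNorm.nonneg (p := p) (qq.2 i0 : ℚ)
    have : (0:ℚ) < padicNorm p (qq.2 i0 : ℚ) := lt_of_le_of_ne h0 (Ne.symm this)
    exact_mod_cast this
  have hPpos : 0 < Pp p qq := lt_of_lt_of_le hpn (padic_le_Pp p qq i0)
  refine ⟨hH1, ⟨i0, hi0⟩, hPpos, ?_⟩
  calc (1:ℝ) ≤ padicNorm p (qq.2 i0 : ℚ) * |((qq.2 i0 : ℚ))| := by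
        exact_mod_cast one_le_padicNorm_mul_abs p (qq.2 i0) hi0
  _ = ((padicNorm p (qq.2 i0 : ℚ) : ℚ) : ℝ) * |((qq.2 i0 : ℚ) : ℝ)| := by push_cast; ring
  _ ≤ Pp p qq * Hh qq := by
      apply mul_le_mul (padic_le_Pp p qq i0) (abs_snd_le_Hh qq i0) (abs_nonneg _) hPpos.le

lemma natAbs_fst_le_hgt {n : ℕ} (qq : ℤ × (Fin n → ℤ)) : qq.1.natAbs ≤ hgt qq := by
  have := Finset.le_sup (f := fun i => ((Fin.cons qq.1 qq.2 : Fin (n+1) → ℤ) i).natAbs)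
    (Finset.mem_univ (0 : Fin (n+1)))
  simpa [hgt] using this

lemma natAbs_snd_le_hgt {n : ℕ} (qq : ℤ × (Fin n → ℤ)) (i : Fin n) : (qq.2 i).natAbs ≤ hgt qq := by
  have := Finset.le_sup (f := fun j => ((Fin.cons qq.1 qq.2 : Fin (n+1) → ℤ) j).natAbs)
    (Finset.mem_univ i.succ)
  simpa [hgt] using this

lemma box_finite (n : ℕ) (c : ℤ) :
    {qq : ℤ × (Fin n → ℤ) | |qq.1| ≤ c ∧ ∀ i, |qq.2 i| ≤ c}.Finite := by
  have h1 : {a : ℤ | |a| ≤ c}.Finite :=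
    (Set.finite_Icc (-c) c).subset (fun a ha => Set.mem_Icc.2 (abs_le.1 ha))
  have h2 : {b : Fin n → ℤ | ∀ i, |b i| ≤ c}.Finite := by
    apply (Set.finite_Icc (fun _ => -c : Fin n → ℤ) (fun _ => c)).subset
    intro b hb
    exact Set.mem_Icc.2 ⟨fun i => neg_le_of_abs_le (hb i), fun i => le_of_abs_le (hb i)⟩
  exact (h1.prod h2).subset (fun qq hqq => Set.mem_prod.2 ⟨hqq.1, hqq.2⟩)

lemma hgt_le_finite (n R : ℕ) : {qq : ℤ × (Fin n → ℤ) | hgt qq ≤ R}.Finite := by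
  apply (box_finite n R).subset
  intro qq hqq
  constructor
  · rw [Int.abs_eq_natAbs]; exact_mod_cast le_trans (natAbs_fst_le_hgt qq) hqq
  · intro i; rw [Int.abs_eq_natAbs]; exact_mod_cast le_trans (natAbs_snd_le_hgt qq i) hqq

lemma reduction (p : ℕ) [hp : Fact p.Prime] {n : ℕ} (y : Fin n → ℚ_[p]) {v : ℝ} (hv : 1 < v)
    (Mn C : ℕ) (hMn1 : 1 ≤ Mn) (M : ℝ) (hM1 : 1 ≤ M) (hMMn : M ≤ (Mn : ℝ))
    (Y : ℝ) (hY : ∀ i, ‖y i‖ ≤ Y) (hY0 : 0 ≤ Y) (hC : 1 + n * Y ≤ (p:ℝ)^C)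
    (qq : ℤ × (Fin n → ℤ))
    (hmem : ‖((qq.1 : ℚ_[p]) + ∑ i, (qq.2 i : ℚ_[p]) * y i)‖ < Hh qq ^ (-v))
    (hPH : Pp p qq * Hh qq ≤ M) (t : ℕ) (hbig : Mn * p ^ (C + t) ≤ hgt qq) :
    C + t ≤ Nat.log p (hgt qq / Mn) ∧
    (Mn : ℝ) * (p:ℝ) ^ (Nat.log p (hgt qq / Mn)) ≤ Hh qq ∧
    ((p:ℤ) ^ (Nat.log p (hgt qq / Mn) - C) ∣ qq.1 ∧
      |qq.1 / (p:ℤ) ^ (Nat.log p (hgt qq / Mn) - C)| ≤ ((Mn * p ^ (C+1) : ℕ) : ℤ)) ∧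
    (∀ i, (p:ℤ) ^ (Nat.log p (hgt qq / Mn)) ∣ qq.2 i ∧
      |qq.2 i / (p:ℤ) ^ (Nat.log p (hgt qq / Mn))| ≤ ((Mn * p ^ (C+1) : ℕ) : ℤ)) := by
  obtain ⟨hH1, ⟨i0, hi0⟩, hPpos, hPH1⟩ := elem_facts p y hv qq hmem
  have hHpos : (0:ℝ) < Hh qq := lt_of_lt_of_le one_pos hH1
  have hp1 : 1 < p := hp.out.one_lt
  have hp0R : (0:ℝ) < (p:ℝ) := by exact_mod_cast hp.out.pos
  have hMnpos : 0 < Mn := hMn1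
  set k := Nat.log p (hgt qq / Mn) with hk
  -- basic nat facts
  have hdiv_ge : p ^ (C + t) ≤ hgt qq / Mn := by
    rw [Nat.le_div_iff_mul_le hMnpos]
    calc p ^ (C+t) * Mn = Mn * p ^ (C+t) := by ring
    _ ≤ hgt qq := hbig
  have hdiv_ne : hgt qq / Mn ≠ 0 := by
    have : 0 < p ^ (C+t) := Nat.pow_pos hp.out.pos
    omega
  have hkt : C + t ≤ k := (Nat.le_log_iff_pow_le hp1 hdiv_ne).2 hdiv_ge
  have hkC : C ≤ k := le_trans (Nat.le_add_right C t) hkt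
  have hpk_le : p ^ k * Mn ≤ hgt qq := by
    have h1 : p ^ k ≤ hgt qq / Mn := Nat.pow_log_le_self p hdiv_ne
    calc p ^ k * Mn ≤ (hgt qq / Mn) * Mn := Nat.mul_le_mul_right _ h1
    _ ≤ hgt qq := Nat.div_mul_le_self _ _
  have hlt : hgt qq < p ^ (k+1) * Mn :=
    (Nat.div_lt_iff_lt_mul hMnpos).1 (Nat.lt_pow_succ_log_self hp1 _)
  -- real versions
  have hHhgt : Hh qq = (hgt qq : ℝ) := Hh_eq_hgt qq
  have hHge : (Mn : ℝ) * (p:ℝ) ^ k ≤ Hh qq := by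
    rw [hHhgt]
    calc (Mn:ℝ) * (p:ℝ)^k = ((p ^ k * Mn : ℕ) : ℝ) := by push_cast; ring
    _ ≤ (hgt qq : ℝ) := by exact_mod_cast hpk_le
  -- P ≤ (p^k)⁻¹
  have hpkR : (0:ℝ) < (p:ℝ)^k := pow_pos hp0R k
  have hP_le : Pp p qq ≤ ((p:ℝ)^k)⁻¹ := by
    have h1 : M * (p:ℝ)^k ≤ Hh qq := by
      calc M * (p:ℝ)^k ≤ (Mn:ℝ) * (p:ℝ)^k := by nlinarith
      _ ≤ Hh qq := hHge
    have h2 : Pp p qq * (M * (p:ℝ)^k) ≤ M := le_trans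
      (mul_le_mul_of_nonneg_left h1 hPpos.le) hPH
    have h3 : Pp p qq * (p:ℝ)^k ≤ 1 := by nlinarith
    rw [inv_eq_one_div, le_div_iff₀ hpkR]
    linarith
  -- divisibility of the q_i
  have hdvd2 : ∀ i, (p:ℤ) ^ k ∣ qq.2 i := by
    intro i
    rw [show ((p:ℤ)^k) = ((p^k : ℕ) : ℤ) by push_cast; ring]
    apply padicNorm.dvd_iff_norm_le.2
    have h1 : ((padicNorm p (qq.2 i : ℚ) : ℚ) : ℝ) ≤ ((p:ℝ)^k)⁻¹ :=
      le_trans (padic_le_Pp p qq i) hP_le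
    rw [zpow_neg, zpow_natCast]
    rw [show ((p:ℝ)^k)⁻¹ = ((((p:ℚ)^k)⁻¹ : ℚ) : ℝ) by push_cast; ring] at h1
    exact_mod_cast h1
  -- bound on ‖q₀‖_p
  have hsum : ‖∑ i, (qq.2 i : ℚ_[p]) * y i‖ ≤ n * (Pp p qq * Y) := by
    calc ‖∑ i, (qq.2 i : ℚ_[p]) * y i‖ ≤ ∑ i, ‖(qq.2 i : ℚ_[p]) * y i‖ := norm_sum_le _ _
    _ ≤ ∑ _i : Fin n, Pp p qq * Y := by
        apply Finset.sum_le_sum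
        intro i _
        rw [norm_mul]
        apply mul_le_mul ?_ (hY i) (norm_nonneg _) hPpos.le
        rw [norm_int_cast_eq]
        exact padic_le_Pp p qq i
    _ = n * (Pp p qq * Y) := by
        rw [Finset.sum_const, Finset.card_univ, Fintype.card_fin, nsmul_eq_mul]
  have hAle : ‖((qq.1 : ℚ_[p]) + ∑ i, (qq.2 i : ℚ_[p]) * y i)‖ ≤ Pp p qq := by
    have h1 : Hh qq ^ (-v) ≤ Hh qq ^ (-1:ℝ) :=
      Real.rpow_le_rpow_of_exponent_le hH1 (by linarith)
    have h2 : Hh qq ^ (-1:ℝ) = (Hh qq)⁻¹ := Real.rpow_neg_one _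
    have h3 : (Hh qq)⁻¹ ≤ Pp p qq := by
      rw [inv_eq_one_div, div_le_iff₀ hHpos]
      linarith
    linarith [hmem]
  have hq0norm : ‖(qq.1 : ℚ_[p])‖ ≤ Pp p qq * (p:ℝ)^C := by
    have hA : (qq.1 : ℚ_[p]) =
        ((qq.1 : ℚ_[p]) + ∑ i, (qq.2 i : ℚ_[p]) * y i) - ∑ i, (qq.2 i : ℚ_[p]) * y i := by ring
    have h1 : ‖(qq.1 : ℚ_[p])‖ ≤ Pp p qq + n * (Pp p qq * Y) := by
      rw [hA]
      exact le_trans (norm_sub_le _ _) (add_le_add hAle hsum)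
    have h2 : Pp p qq + n * (Pp p qq * Y) = Pp p qq * (1 + n * Y) := by ring
    calc ‖(qq.1 : ℚ_[p])‖ ≤ Pp p qq * (1 + n * Y) := by rw [← h2]; exact h1
    _ ≤ Pp p qq * (p:ℝ)^C := mul_le_mul_of_nonneg_left hC hPpos.le
  -- divisibility of q₀
  have hpow_split : (p:ℝ)^k = (p:ℝ)^(k-C) * (p:ℝ)^C := by
    rw [← pow_add, Nat.sub_add_cancel hkC]
  have hpkCR : (0:ℝ) < (p:ℝ)^(k-C) := pow_pos hp0R _
  have hq0norm' : ‖(qq.1 : ℚ_[p])‖ ≤ ((p:ℝ)^(k-C))⁻¹ := by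
    have h1 : Pp p qq * (p:ℝ)^C ≤ ((p:ℝ)^k)⁻¹ * (p:ℝ)^C :=
      mul_le_mul_of_nonneg_right hP_le (by positivity)
    have h2 : ((p:ℝ)^k)⁻¹ * (p:ℝ)^C = ((p:ℝ)^(k-C))⁻¹ := by
      rw [hpow_split, mul_inv, mul_assoc, inv_mul_cancel₀ (by positivity), mul_one]
    linarith [hq0norm]
  have hdvd1 : (p:ℤ) ^ (k - C) ∣ qq.1 := by
    rw [show ((p:ℤ)^(k-C)) = ((p^(k-C) : ℕ) : ℤ) by push_cast; ring]
    apply padicNorm.dvd_iff_norm_le.2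
    rw [zpow_neg, zpow_natCast]
    rw [norm_int_cast_eq] at hq0norm'
    rw [show ((p:ℝ)^(k-C))⁻¹ = ((((p:ℚ)^(k-C))⁻¹ : ℚ) : ℝ) by push_cast; ring] at hq0norm'
    exact_mod_cast hq0norm'
  -- box bounds
  have habs_fst : |qq.1| ≤ (hgt qq : ℤ) := by
    rw [Int.abs_eq_natAbs]; exact_mod_cast natAbs_fst_le_hgt qq
  have habs_snd : ∀ i, |qq.2 i| ≤ (hgt qq : ℤ) := by
    intro i; rw [Int.abs_eq_natAbs]; exact_mod_cast natAbs_snd_le_hgt qq i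
  have hltZ : (hgt qq : ℤ) < (p:ℤ)^(k+1) * Mn := by exact_mod_cast hlt
  have hbox1 : |qq.1 / (p:ℤ) ^ (k - C)| ≤ ((Mn * p ^ (C+1) : ℕ) : ℤ) := by
    have hd0 : (0:ℤ) < (p:ℤ)^(k-C) := by positivity
    have he : (p:ℤ)^(k-C) * (qq.1 / (p:ℤ)^(k-C)) = qq.1 := Int.mul_ediv_cancel' hdvd1
    have habs : (p:ℤ)^(k-C) * |qq.1 / (p:ℤ)^(k-C)| = |qq.1| := by
      calc (p:ℤ)^(k-C) * |qq.1 / (p:ℤ)^(k-C)|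
          = |(p:ℤ)^(k-C)| * |qq.1 / (p:ℤ)^(k-C)| := by rw [abs_of_pos hd0]
      _ = |(p:ℤ)^(k-C) * (qq.1 / (p:ℤ)^(k-C))| := (abs_mul _ _).symm
      _ = |qq.1| := by rw [he]
    have hsplit : (p:ℤ)^(k+1) * Mn = (p:ℤ)^(k-C) * ((p:ℤ)^(C+1) * Mn) := by
      rw [← mul_assoc, ← pow_add]
      congr 2
      omega
    have : (p:ℤ)^(k-C) * |qq.1 / (p:ℤ)^(k-C)| < (p:ℤ)^(k-C) * ((p:ℤ)^(C+1) * Mn) := by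
      rw [habs, ← hsplit]
      exact lt_of_le_of_lt habs_fst hltZ
    have h2 := lt_of_mul_lt_mul_left this hd0.le
    calc |qq.1 / (p:ℤ)^(k-C)| ≤ (p:ℤ)^(C+1) * Mn := le_of_lt h2
    _ = ((Mn * p ^ (C+1) : ℕ) : ℤ) := by push_cast; ring
  have hbox2 : ∀ i, |qq.2 i / (p:ℤ) ^ k| ≤ ((Mn * p ^ (C+1) : ℕ) : ℤ) := by
    intro i
    have hd0 : (0:ℤ) < (p:ℤ)^k := by positivity
    have he : (p:ℤ)^k * (qq.2 i / (p:ℤ)^k) = qq.2 i := Int.mul_ediv_cancel' (hdvd2 i)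
    have habs : (p:ℤ)^k * |qq.2 i / (p:ℤ)^k| = |qq.2 i| := by
      calc (p:ℤ)^k * |qq.2 i / (p:ℤ)^k|
          = |(p:ℤ)^k| * |qq.2 i / (p:ℤ)^k| := by rw [abs_of_pos hd0]
      _ = |(p:ℤ)^k * (qq.2 i / (p:ℤ)^k)| := (abs_mul _ _).symm
      _ = |qq.2 i| := by rw [he]
    have hsplit : (p:ℤ)^(k+1) * Mn = (p:ℤ)^k * ((p:ℤ) * Mn) := by
      rw [← mul_assoc, ← pow_succ]
    have : (p:ℤ)^k * |qq.2 i / (p:ℤ)^k| < (p:ℤ)^k * ((p:ℤ) * Mn) := by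
      rw [habs, ← hsplit]
      exact lt_of_le_of_lt (habs_snd i) hltZ
    have h2 := lt_of_mul_lt_mul_left this hd0.le
    have hmono : (p:ℤ) * Mn ≤ (p:ℤ)^(C+1) * Mn := by
      apply mul_le_mul_of_nonneg_right _ (by positivity)
      calc (p:ℤ) = (p:ℤ)^1 := (pow_one _).symm
      _ ≤ (p:ℤ)^(C+1) := pow_le_pow_right₀ (by exact_mod_cast hp.out.one_le) (by omega)
    calc |qq.2 i / (p:ℤ)^k| ≤ (p:ℤ)^(C+1) * Mn := le_of_lt (lt_of_lt_of_le h2 hmono)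
    _ = ((Mn * p ^ (C+1) : ℕ) : ℤ) := by push_cast; ring
  exact ⟨hkt, hHge, ⟨hdvd1, hbox1⟩, fun i => ⟨hdvd2 i, hbox2 i⟩⟩

lemma part1 (p : ℕ) [hp : Fact p.Prime] {n : ℕ} (y : Fin n → ℚ_[p]) {v : ℝ} (hv : 1 < v)
    (S : Set (ℤ × (Fin n → ℤ)))
    (hSm : ∀ qq, qq ∈ S ↔ ‖((qq.1 : ℚ_[p]) + ∑ i, (qq.2 i : ℚ_[p]) * y i)‖ < Hh qq ^ (-v))
    (hinf : S.Infinite) (M0 : ℝ) (hbdd : ∀ qq ∈ S, Pp p qq * Hh qq ≤ M0) : False := by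
  have hp1 : 1 < p := hp.out.one_lt
  have hp1R : (1:ℝ) < (p:ℝ) := by exact_mod_cast hp1
  have hp0R : (0:ℝ) < (p:ℝ) := by linarith
  set M : ℝ := max M0 1 with hMdef
  have hM1 : (1:ℝ) ≤ M := le_max_right _ _
  have hbdd' : ∀ qq ∈ S, Pp p qq * Hh qq ≤ M :=
    fun qq h => (hbdd qq h).trans (le_max_left _ _)
  set Mn : ℕ := ⌈M⌉₊ with hMndef
  have hMMn : M ≤ (Mn : ℝ) := Nat.le_ceil M
  have hMn1 : 1 ≤ Mn := by
    have h : (1:ℝ) ≤ (Mn:ℝ) := le_trans hM1 hMMn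
    exact_mod_cast h
  set Y : ℝ := pnormP y with hYdef
  have hY : ∀ i, ‖y i‖ ≤ Y := fun i => le_fin_iSup (fun j => ‖y j‖) i
  have hY0 : (0:ℝ) ≤ Y := Real.iSup_nonneg fun i => norm_nonneg _
  obtain ⟨C, hC⟩ : ∃ C : ℕ, 1 + n * Y ≤ (p:ℝ) ^ C := by
    obtain ⟨C, hC⟩ := pow_unbounded_of_one_lt (1 + n * Y) hp1R
    exact ⟨C, hC.le⟩
  -- the reduction map
  set F : ℤ × (Fin n → ℤ) → ℤ × (Fin n → ℤ) := fun qq =>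
    (qq.1 / (p:ℤ) ^ (Nat.log p (hgt qq / Mn) - C),
      fun i => qq.2 i / (p:ℤ) ^ (Nat.log p (hgt qq / Mn))) with hFdef
  set c : ℤ := ((Mn * p ^ (C+1) : ℕ) : ℤ) with hcdef
  set T : Set (ℤ × (Fin n → ℤ)) := {qq ∈ S | Mn * p ^ (C+1) ≤ hgt qq} with hTdef
  have hT : T.Infinite := by
    apply (hinf.diff (hgt_le_finite n (Mn * p ^ (C+1) - 1))).mono
    rintro qq ⟨h1, h2⟩
    simp only [Set.mem_setOf_eq] at h2
    exact ⟨h1, by omega⟩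
  have hmaps : ∀ qq ∈ T, |(F qq).1| ≤ c ∧ ∀ i, |(F qq).2 i| ≤ c := by
    rintro qq ⟨hqqS, hqqbig⟩
    obtain ⟨_, _, ⟨_, hb1⟩, hb2⟩ := reduction p y hv Mn C hMn1 M hM1 hMMn Y hY hY0 hC qq
      ((hSm qq).1 hqqS) (hbdd' qq hqqS) 1 hqqbig
    exact ⟨hb1, fun i => (hb2 i).2⟩
  -- pigeonhole
  have hexists : ∃ rr, {qq ∈ T | F qq = rr}.Infinite := by
    by_contra h
    push_neg at h
    have hfinB : {rr : ℤ × (Fin n → ℤ) | |rr.1| ≤ c ∧ ∀ i, |rr.2 i| ≤ c}.Finite := box_finite n c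
    have hTfin : T.Finite := by
      apply Set.Finite.subset (hfinB.biUnion (fun rr _ => h rr))
      intro qq hqq
      exact Set.mem_biUnion (hmaps qq hqq) ⟨hqq, rfl⟩
    exact hT hTfin
  obtain ⟨⟨a, b⟩, hfib⟩ := hexists
  set w : ℚ_[p] := (a : ℚ_[p]) + ∑ i, ((p:ℚ_[p]) ^ C * (b i : ℚ_[p])) * y i with hw
  have hext : ∀ t : ℕ, ∃ qq, (qq ∈ S ∧ Mn * p ^ (C+1) ≤ hgt qq) ∧ F qq = (a, b) ∧
      Mn * p ^ (C + (t+1)) ≤ hgt qq := by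
    intro t
    obtain ⟨qq, hqq⟩ := (hfib.diff (hgt_le_finite n (Mn * p ^ (C + (t+1)) - 1))).nonempty
    obtain ⟨⟨hqT, hqF⟩, hqbig⟩ := hqq
    refine ⟨qq, hqT, hqF, ?_⟩
    simp only [Set.mem_setOf_eq] at hqbig
    have hppos : 0 < p ^ (C + (t+1)) := Nat.pow_pos hp.out.pos
    omega
  set r : ℝ := (p:ℝ) ^ (-(v-1)) with hr
  have hr0 : (0:ℝ) ≤ r := Real.rpow_nonneg hp0R.le _
  have hr1 : r < 1 := Real.rpow_lt_one_of_one_lt_of_neg hp1R (by linarith)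
  -- the key limit bound
  have hwle : ∀ t : ℕ, ‖w‖ ≤ r ^ t := by
    intro t
    obtain ⟨qq, ⟨hqqS, _⟩, hFqq, hbigt⟩ := hext t
    have hmem := (hSm qq).1 hqqS
    obtain ⟨hkt, hHge, ⟨hdvd1, _⟩, hred2⟩ := reduction p y hv Mn C hMn1 M hM1 hMMn Y hY hY0 hC qq
      hmem (hbdd' qq hqqS) (t+1) hbigt
    set k : ℕ := Nat.log p (hgt qq / Mn) with hkdef
    have hkC : C ≤ k := le_trans (by omega) hkt
    have hktR : (C:ℝ) + (t:ℝ) + 1 ≤ (k:ℝ) := by exact_mod_cast hkt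
    have ha : qq.1 = (p:ℤ) ^ (k - C) * a := by
      have h1 := Int.mul_ediv_cancel' hdvd1
      have hfst : qq.1 / (p:ℤ) ^ (k - C) = a := congrArg Prod.fst hFqq
      rw [← hfst]
      exact h1.symm
    have hbi : ∀ i, qq.2 i = (p:ℤ) ^ k * b i := by
      intro i
      have hsnd : qq.2 i / (p:ℤ) ^ k = b i := congrFun (congrArg Prod.snd hFqq) i
      rw [← hsnd]
      exact (Int.mul_ediv_cancel' (hred2 i).1).symm
    have hAw : ((qq.1 : ℚ_[p]) + ∑ i, (qq.2 i : ℚ_[p]) * y i) = (p:ℚ_[p]) ^ (k - C) * w := by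
      rw [hw, mul_add, Finset.mul_sum]
      congr 1
      · rw [ha]; push_cast; ring
      · apply Finset.sum_congr rfl
        intro i _
        rw [hbi i]; push_cast
        rw [show ((p:ℚ_[p]) ^ k) = (p:ℚ_[p]) ^ (k - C) * (p:ℚ_[p]) ^ C by
          rw [← pow_add, Nat.sub_add_cancel hkC]]
        ring
    have hnormA : ‖((qq.1 : ℚ_[p]) + ∑ i, (qq.2 i : ℚ_[p]) * y i)‖ = ((p:ℝ) ^ (k-C))⁻¹ * ‖w‖ := by
      rw [hAw, norm_mul]
      congr 1
      rw [Padic.norm_p_pow, zpow_neg, zpow_natCast]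
    have hpkR : (0:ℝ) < (p:ℝ) ^ k := pow_pos hp0R _
    have hpkCR : (0:ℝ) < (p:ℝ) ^ (k-C) := pow_pos hp0R _
    have hHge' : (p:ℝ) ^ k ≤ Hh qq := by
      have h1 : (1:ℝ) ≤ (Mn:ℝ) := by exact_mod_cast hMn1
      nlinarith
    have h1 : Hh qq ^ (-v) ≤ ((p:ℝ) ^ k) ^ (-v) :=
      Real.rpow_le_rpow_of_nonpos hpkR hHge' (by linarith)
    have hnw : ‖w‖ < (p:ℝ) ^ (k-C) * (((p:ℝ) ^ k) ^ (-v)) := by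
      have h2 : ((p:ℝ) ^ (k-C))⁻¹ * ‖w‖ < ((p:ℝ) ^ k) ^ (-v) := lt_of_lt_of_le (hnormA ▸ hmem) h1
      calc ‖w‖ = (p:ℝ)^(k-C) * (((p:ℝ)^(k-C))⁻¹ * ‖w‖) := by field_simp
      _ < (p:ℝ) ^ (k-C) * (((p:ℝ) ^ k) ^ (-v)) := by
          exact mul_lt_mul_of_pos_left h2 hpkCR
    have hfinal : (p:ℝ) ^ (k-C) * (((p:ℝ) ^ k) ^ (-v)) ≤ r ^ t := by
      rw [show ((p:ℝ) ^ (k-C)) = (p:ℝ) ^ (((k-C:ℕ)) : ℝ) by rw [Real.rpow_natCast],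
          show ((p:ℝ) ^ k) = (p:ℝ) ^ ((k:ℕ) : ℝ) by rw [Real.rpow_natCast],
          ← Real.rpow_natCast r t, hr,
          ← Real.rpow_mul hp0R.le, ← Real.rpow_mul hp0R.le, ← Real.rpow_add hp0R]
      apply Real.rpow_le_rpow_of_exponent_le hp1R.le
      have hcast : (((k-C:ℕ)) : ℝ) = (k:ℝ) - (C:ℝ) := by
        have : ((k - C : ℕ) : ℤ) = (k:ℤ) - C := by omega
        exact_mod_cast this
      rw [hcast]
      have hC0 : (0:ℝ) ≤ (C:ℝ) := Nat.cast_nonneg _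
      have ht0 : (0:ℝ) ≤ (t:ℝ) := Nat.cast_nonneg _
      nlinarith
    exact le_trans hnw.le hfinal
  have hw0 : w = 0 := by
    have htend : Filter.Tendsto (fun t : ℕ => r ^ t) Filter.atTop (nhds 0) :=
      tendsto_pow_atTop_nhds_zero_of_lt_one hr0 hr1
    have hle0 : ‖w‖ ≤ 0 := ge_of_tendsto' htend hwle
    exact norm_le_zero_iff.1 hle0
  -- some b i0 is nonzero
  obtain ⟨qq0, ⟨hq0S, hq0big⟩, hF0, _⟩ := hext 0
  obtain ⟨_, ⟨i0, hi0⟩, _, _⟩ := elem_facts p y hv qq0 ((hSm qq0).1 hq0S)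
  have hb_ne : b i0 ≠ 0 := by
    intro hb0
    obtain ⟨_, _, _, hred2⟩ := reduction p y hv Mn C hMn1 M hM1 hMMn Y hY hY0 hC qq0
      ((hSm qq0).1 hq0S) (hbdd' qq0 hq0S) 1 hq0big
    have hsnd : qq0.2 i0 / (p:ℤ) ^ (Nat.log p (hgt qq0 / Mn)) = b i0 :=
      congrFun (congrArg Prod.snd hF0) i0
    have := Int.mul_ediv_cancel' (hred2 i0).1
    rw [hsnd, hb0, mul_zero] at this
    exact hi0 this.symm
  -- construct elements of S with unbounded Pp * Hh
  set B : Fin n → ℤ := fun i => (p:ℤ) ^ C * b i with hB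
  have hpZ : (p:ℤ) ≠ 0 := by exact_mod_cast hp.out.ne_zero
  have hBi0 : B i0 ≠ 0 := mul_ne_zero (pow_ne_zero _ hpZ) hb_ne
  set δ : ℝ := ((padicNorm p (B i0 : ℚ) : ℚ) : ℝ) with hδ
  have hδpos : 0 < δ := by
    have h1 : padicNorm p (B i0 : ℚ) ≠ 0 := by
      rw [padicNorm.eq_zpow_of_nonzero (by exact_mod_cast hBi0)]
      have : (0:ℚ) < (p:ℚ) := by exact_mod_cast hp.out.pos
      exact ne_of_gt (zpow_pos this _)
    have h0 := padicNorm.nonneg (p := p) (B i0 : ℚ)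
    have h2 : (0:ℚ) < padicNorm p (B i0 : ℚ) := lt_of_le_of_ne h0 (Ne.symm h1)
    rw [hδ]
    exact_mod_cast h2
  obtain ⟨m, hm⟩ := exists_nat_gt (M / δ)
  set m' : ℤ := (p:ℤ) * m + 1 with hm'
  have hp1Z : (1:ℤ) ≤ (p:ℤ) := by exact_mod_cast hp.out.one_le
  have hm'pos : 0 < m' := by
    rw [hm']
    have h1 : (0:ℤ) ≤ (p:ℤ) * m := mul_nonneg (by linarith) (Int.ofNat_nonneg m)
    linarith
  have hm'R : M / δ < (m' : ℝ) := by
    have h1 : (m:ℤ) ≤ m' := by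
      rw [hm']
      have h2 : (m:ℤ) ≤ (p:ℤ) * m := le_mul_of_one_le_left (Int.ofNat_nonneg m) hp1Z
      linarith
    have h2 : (m:ℝ) ≤ (m':ℝ) := by exact_mod_cast h1
    linarith
  set e : ℤ × (Fin n → ℤ) := (m' * a, fun i => m' * B i) with he
  have heS : e ∈ S := by
    rw [hSm]
    have hAe : ((e.1 : ℚ_[p]) + ∑ i, (e.2 i : ℚ_[p]) * y i) = (m' : ℚ_[p]) * w := by
      rw [hw, mul_add, Finset.mul_sum, he]
      congr 1
      · push_cast; ring
      · apply Finset.sum_congr rfl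
        intro i _
        show ((m' * B i : ℤ) : ℚ_[p]) * y i = (m' : ℚ_[p]) * ((p:ℚ_[p]) ^ C * (b i : ℚ_[p]) * y i)
        rw [hB]
        push_cast
        ring
    rw [hAe, hw0, mul_zero, norm_zero]
    apply Real.rpow_pos_of_pos
    have h1 : (1:ℝ) ≤ |((e.2 i0 : ℚ) : ℝ)| := by
      have hne : e.2 i0 ≠ 0 := mul_ne_zero (ne_of_gt hm'pos) hBi0
      rw [show |((e.2 i0 : ℚ) : ℝ)| = |((e.2 i0 : ℝ))| by norm_cast]
      exact_mod_cast Int.one_le_abs hne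
    linarith [abs_snd_le_Hh e i0]
  -- contradiction
  have hPe : δ ≤ Pp p e := by
    have h1 : padicNorm p (e.2 i0 : ℚ) = padicNorm p (B i0 : ℚ) := by
      show padicNorm p ((m' * B i0 : ℤ) : ℚ) = _
      have h2 : ((m' * B i0 : ℤ) : ℚ) = (m' : ℚ) * (B i0 : ℚ) := by push_cast; ring
      rw [h2, padicNorm.mul]
      have h3 : padicNorm p (m' : ℚ) = 1 := by
        rw [padicNorm.int_eq_one_iff]
        intro hdvd
        rw [hm'] at hdvd
        have : (p:ℤ) ∣ 1 := (dvd_add_right (dvd_mul_right (p:ℤ) (m:ℤ))).mp hdvd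
        have := Int.le_of_dvd one_pos this
        have hp2 : (2:ℤ) ≤ (p:ℤ) := by exact_mod_cast hp.out.two_le
        omega
      rw [h3, one_mul]
    calc δ = ((padicNorm p (e.2 i0 : ℚ) : ℚ) : ℝ) := by rw [h1]
    _ ≤ Pp p e := padic_le_Pp p e i0
  have hHe : (m' : ℝ) ≤ Hh e := by
    have h1 : (m' : ℝ) ≤ |((e.2 i0 : ℚ) : ℝ)| := by
      rw [show |((e.2 i0 : ℚ) : ℝ)| = |((e.2 i0 : ℝ))| by norm_cast]
      have : m' ≤ |e.2 i0| := by
        show m' ≤ |m' * B i0|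
        rw [abs_mul, abs_of_pos hm'pos]
        have h2 : 1 ≤ |B i0| := Int.one_le_abs hBi0
        nlinarith
      exact_mod_cast this
    linarith [abs_snd_le_Hh e i0]
  have hfinal : M < Pp p e * Hh e := by
    have h1 : δ * (m' : ℝ) ≤ Pp p e * Hh e := by
      apply mul_le_mul hPe hHe _ (le_trans hδpos.le hPe)
      have : (0:ℤ) < m' := hm'pos
      positivity
    have h2 : M < δ * (m' : ℝ) := by
      rw [div_lt_iff₀ hδpos] at hm'R
      linarith [hm'R]
    linarith
  linarith [hbdd' e heS, hfinal]

theorem stmt_1 (p : ℕ) [Fact p.Prime] (n : ℕ) (y : Fin n → ℚ_[p]) (v : ℝ) (hv : 1 < v)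
    (S : Set (ℤ × (Fin n → ℤ)))
    (hS : S = {qq | ‖((qq.1 : ℚ_[p]) + ∑ i, (qq.2 i : ℚ_[p]) * y i)‖ <
        (supnorm (Fin.cons (qq.1 : ℚ) (fun i => (qq.2 i : ℚ)))) ^ (-v)})
    (hinf : S.Infinite) :
    (∀ M : ℝ, ∃ qq ∈ S, M < pnorm p (fun i => (qq.2 i : ℚ)) *
        supnorm (Fin.cons (qq.1 : ℚ) (fun i => (qq.2 i : ℚ)))) ∧
    ∀ qq ∈ S, ‖((qq.1 : ℚ_[p]) + ∑ i, (qq.2 i : ℚ_[p]) * y i)‖ <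
      (pnorm p (fun i => (qq.2 i : ℚ)) *
          supnorm (Fin.cons (qq.1 : ℚ) (fun i => (qq.2 i : ℚ)))) ^ (-(v - 1)) *
        (supnorm (Fin.cons (qq.1 : ℚ) (fun i => (qq.2 i : ℚ))))⁻¹ := by
  subst hS
  have hmemS : ∀ qq : ℤ × (Fin n → ℤ), qq ∈ {qq : ℤ × (Fin n → ℤ) |
      ‖((qq.1 : ℚ_[p]) + ∑ i, (qq.2 i : ℚ_[p]) * y i)‖ <
        (supnorm (Fin.cons (qq.1 : ℚ) (fun i => (qq.2 i : ℚ)))) ^ (-v)} ↔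
      ‖((qq.1 : ℚ_[p]) + ∑ i, (qq.2 i : ℚ_[p]) * y i)‖ < Hh qq ^ (-v) := by
    intro qq; rfl
  constructor
  · intro M
    by_contra hcon
    push_neg at hcon
    exact part1 p y hv _ hmemS hinf M (fun qq h => hcon qq h)
  · intro qq hqq
    have hmem : ‖((qq.1 : ℚ_[p]) + ∑ i, (qq.2 i : ℚ_[p]) * y i)‖ < Hh qq ^ (-v) :=
      (hmemS qq).1 hqq
    obtain ⟨hH1, _, hPpos, hPH1⟩ := elem_facts p y hv qq hmem
    have hHpos : (0:ℝ) < Hh qq := lt_of_lt_of_le one_pos hH1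
    show ‖((qq.1 : ℚ_[p]) + ∑ i, (qq.2 i : ℚ_[p]) * y i)‖ <
      (Pp p qq * Hh qq) ^ (-(v-1)) * (Hh qq)⁻¹
    have key : Hh qq ^ (-v) ≤ (Pp p qq * Hh qq) ^ (-(v-1)) * (Hh qq)⁻¹ := by
      have h1 : Hh qq ^ (-v) = Hh qq ^ (-(v-1)) * Hh qq ^ (-1:ℝ) := by
        rw [← Real.rpow_add hHpos]; ring_nf
      have h2 : Hh qq ^ (-(v-1)) ≤ (Pp p qq * Hh qq) ^ (-(v-1)) := by
        apply Real.rpow_le_rpow_of_nonpos (by positivity)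
          (mul_le_of_le_one_left hHpos.le (Pp_le_one p qq)) (by linarith)
      rw [h1, Real.rpow_neg_one]
      apply mul_le_mul_of_nonneg_right h2 (by positivity)
    exact lt_of_lt_of_le hmem key
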